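/- Let G be a 2-coloring of the edges of a complete graph that contains no monochromatic clique of size t, and let k < t. Then the number of monochromatic cliques of size k in G is at most (2/k!)·∏_{r=0}^{k−1} C(2t−2−r, t−1). -/

import Mathlib

open Finset

theorem my_empty_of_no_one {V : Type*} [DecidableEq V] (d : V → V → Bool) (b : Bool)
    (A : Finset V)
    (h : ¬ ∃ S ⊆ A, S.card = 1 ∧ ∀ i ∈ S, ∀ j ∈ S, i ≠ j → d i j = b) :
    A = ∅ := by
  by_contra hA
  obtain ⟨v, hv⟩ := Finset.nonempty_iff_ne_empty.mpr hA
  refine h ⟨{v}, by simpa using hv, by simp, ?_⟩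
  intro i hi j hj hij
  simp only [Finset.mem_singleton] at hi hj
  exact absurd (hi.trans hj.symm) hij

theorem my_insert_clique {V : Type*} [DecidableEq V] (d : V → V → Bool)
    (hsym : ∀ i j, d i j = d j i) (b : Bool) (v : V) (S : Finset V)
    (hcl : ∀ i ∈ S, ∀ j ∈ S, i ≠ j → d i j = b) (hvN : ∀ u ∈ S, d v u = b) :
    ∀ i ∈ insert v S, ∀ j ∈ insert v S, i ≠ j → d i j = b := by
  intro i hi j hj hij
  rcases Finset.mem_insert.mp hi with hiv | hi'
  · have hj' : j ∈ S :=
      (Finset.mem_insert.mp hj).resolve_left fun h => hij (hiv.trans h.symm)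
    rw [hiv]
    exact hvN j hj'
  · rcases Finset.mem_insert.mp hj with hjv | hj'
    · rw [hsym i j, hjv]
      exact hvN i hi'
    · exact hcl i hi' j hj' hij

theorem my_ramsey {V : Type*} [DecidableEq V] (d : V → V → Bool)
    (hsym : ∀ i j, d i j = d j i) :
    ∀ (n s t : ℕ), s + t ≤ n → ∀ A : Finset V,
      (¬ ∃ S ⊆ A, S.card = s + 1 ∧ ∀ i ∈ S, ∀ j ∈ S, i ≠ j → d i j = true) →
      (¬ ∃ S ⊆ A, S.card = t + 1 ∧ ∀ i ∈ S, ∀ j ∈ S, i ≠ j → d i j = false) →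
      A.card < (s + t).choose s := by
  intro n
  induction n with
  | zero =>
    intro s t hst A h1 h2
    obtain ⟨rfl, rfl⟩ : s = 0 ∧ t = 0 := by omega
    rw [my_empty_of_no_one d true A h1]
    simp
  | succ n ih =>
    intro s t hst A h1 h2
    rcases s with _ | s
    · rw [my_empty_of_no_one d true A h1]
      simp [Nat.choose_pos]
    rcases t with _ | t
    · rw [my_empty_of_no_one d false A h2]
      simp [Nat.choose_self]
    rcases A.eq_empty_or_nonempty with rfl | ⟨v, hv⟩
    · simpa using Nat.choose_pos (by omega : s + 1 ≤ s + 1 + (t + 1))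
    set A1 := (A.erase v).filter (fun u => d v u = true) with hA1def
    set A2 := (A.erase v).filter (fun u => d v u = false) with hA2def
    have hsubA : ∀ u ∈ A1 ∪ A2, u ∈ A := by
      intro u hu
      rcases Finset.mem_union.mp hu with h | h <;>
        exact Finset.mem_of_mem_erase ((Finset.mem_filter.mp h).1)
    have hA1 : A1.card < (s + (t + 1)).choose s := by
      refine ih s (t + 1) (by omega) A1 ?_ ?_
      · rintro ⟨S, hS, hcard, hcl⟩
        have hvS : v ∉ S := fun hvS =>
          Finset.notMem_erase v A ((Finset.mem_filter.mp (hS hvS)).1)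
        refine h1 ⟨insert v S, ?_, ?_, ?_⟩
        · intro x hx
          rcases Finset.mem_insert.mp hx with rfl | hx
          · exact hv
          · exact Finset.mem_of_mem_erase ((Finset.mem_filter.mp (hS hx)).1)
        · rw [Finset.card_insert_of_notMem hvS, hcard]
        · exact my_insert_clique d hsym true v S hcl
            (fun u hu => (Finset.mem_filter.mp (hS hu)).2)
      · rintro ⟨S, hS, hcard, hcl⟩
        exact h2 ⟨S, fun x hx => Finset.mem_of_mem_erase
          ((Finset.mem_filter.mp (hS hx)).1), hcard, hcl⟩
    have hA2 : A2.card < (s + 1 + t).choose (s + 1) := by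
      refine ih (s + 1) t (by omega) A2 ?_ ?_
      · rintro ⟨S, hS, hcard, hcl⟩
        exact h1 ⟨S, fun x hx => Finset.mem_of_mem_erase
          ((Finset.mem_filter.mp (hS hx)).1), hcard, hcl⟩
      · rintro ⟨S, hS, hcard, hcl⟩
        have hvS : v ∉ S := fun hvS =>
          Finset.notMem_erase v A ((Finset.mem_filter.mp (hS hvS)).1)
        refine h2 ⟨insert v S, ?_, ?_, ?_⟩
        · intro x hx
          rcases Finset.mem_insert.mp hx with rfl | hx
          · exact hv
          · exact Finset.mem_of_mem_erase ((Finset.mem_filter.mp (hS hx)).1)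
        · rw [Finset.card_insert_of_notMem hvS, hcard]
        · exact my_insert_clique d hsym false v S hcl
            (fun u hu => (Finset.mem_filter.mp (hS hu)).2)
    have hsub : A ⊆ insert v (A1 ∪ A2) := by
      intro u hu
      rcases eq_or_ne u v with rfl | huv
      · exact Finset.mem_insert_self _ _
      · refine Finset.mem_insert_of_mem (Finset.mem_union.mpr ?_)
        rcases Bool.eq_false_or_eq_true (d v u) with h | h
        · exact Or.inl (Finset.mem_filter.mpr ⟨Finset.mem_erase.mpr ⟨huv, hu⟩, h⟩)
        · exact Or.inr (Finset.mem_filter.mpr ⟨Finset.mem_erase.mpr ⟨huv, hu⟩, h⟩)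
    have hcards : A.card ≤ 1 + A1.card + A2.card := by
      calc A.card ≤ (insert v (A1 ∪ A2)).card := Finset.card_le_card hsub
        _ ≤ 1 + (A1 ∪ A2).card := by rw [add_comm]; exact Finset.card_insert_le _ _
        _ ≤ 1 + (A1.card + A2.card) := Nat.add_le_add_left (Finset.card_union_le _ _) 1
        _ = 1 + A1.card + A2.card := by ring
    have hpascal : (s + 1 + (t + 1)).choose (s + 1)
        = (s + (t + 1)).choose s + (s + 1 + t).choose (s + 1) := by
      have h := Nat.choose_succ_succ (s + t + 1) s
      have e1 : s + 1 + (t + 1) = s + t + 1 + 1 := by omega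
      have e2 : s + (t + 1) = s + t + 1 := by omega
      have e3 : s + 1 + t = s + t + 1 := by omega
      rw [e1, e2, e3]
      exact h
    omega

theorem my_nbhd {V : Type*} [Fintype V] [DecidableEq V] (c : V → V → Bool)
    (hsym : ∀ i j, c i j = c j i) (t : ℕ)
    (hno : ¬ ∃ (S : Finset V) (b : Bool),
      S.card = t ∧ ∀ i ∈ S, ∀ j ∈ S, i ≠ j → c i j = b)
    (b : Bool) (r : ℕ) (hr : r + 2 ≤ t) (S : Finset V) (hScard : S.card = r)
    (hScl : ∀ i ∈ S, ∀ j ∈ S, i ≠ j → c i j = b) :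
    (Finset.univ.filter fun v => v ∉ S ∧ ∀ u ∈ S, c v u = b).card
      ≤ (2 * t - 2 - r).choose (t - 1) := by
  set d : V → V → Bool := fun i j => c i j == b with hd
  have hdsym : ∀ i j, d i j = d j i := fun i j => by simp [hd, hsym i j]
  set N := Finset.univ.filter fun v => v ∉ S ∧ ∀ u ∈ S, c v u = b with hN
  have key := my_ramsey d hdsym ((t - r - 1) + (t - 1)) (t - r - 1) (t - 1) le_rfl N ?_ ?_
  · have e1 : (t - r - 1) + (t - 1) = 2 * t - 2 - r := by omega
    have e2 : (2 * t - 2 - r).choose (t - r - 1) = (2 * t - 2 - r).choose (t - 1) := by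
      have h3 := Nat.choose_symm (show t - 1 ≤ 2 * t - 2 - r by omega)
      rw [show (2 * t - 2 - r) - (t - 1) = t - r - 1 by omega] at h3
      exact h3
    rw [e1, e2] at key
    exact key.le
  · rintro ⟨S', hS', hcard, hcl⟩
    have hS'N : ∀ x ∈ S', x ∉ S ∧ ∀ u ∈ S, c x u = b := by
      intro x hx
      exact (Finset.mem_filter.mp (hS' hx)).2
    have hdisj : Disjoint S S' := by
      rw [Finset.disjoint_left]
      intro x hxS hxS'
      exact (hS'N x hxS').1 hxS
    refine hno ⟨S ∪ S', b, ?_, ?_⟩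
    · rw [Finset.card_union_of_disjoint hdisj, hScard, hcard]
      omega
    · intro i hi j hj hij
      rcases Finset.mem_union.mp hi with hi' | hi'
      · rcases Finset.mem_union.mp hj with hj' | hj'
        · exact hScl i hi' j hj' hij
        · rw [hsym]
          exact (hS'N j hj').2 i hi'
      · rcases Finset.mem_union.mp hj with hj' | hj'
        · exact (hS'N i hi').2 j hj'
        · have := hcl i hi' j hj' hij
          simpa [hd] using this
  · rintro ⟨S', hS', hcard, hcl⟩
    refine hno ⟨S', !b, by omega, ?_⟩
    intro i hi j hj hij
    have := hcl i hi j hj hij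
    simp only [hd, beq_eq_false_iff_ne, ne_eq] at this
    cases hcb : c i j <;> cases b <;> simp_all

theorem my_step {V : Type*} [Fintype V] [DecidableEq V] (c : V → V → Bool)
    (hsym : ∀ i j, c i j = c j i) (t : ℕ)
    (hno : ¬ ∃ (S : Finset V) (b : Bool),
      S.card = t ∧ ∀ i ∈ S, ∀ j ∈ S, i ≠ j → c i j = b)
    (b : Bool) (r : ℕ) (hr : r + 2 ≤ t) :
    (r + 1) * (Finset.univ.filter (fun S : Finset V =>
        S.card = r + 1 ∧ ∀ i ∈ S, ∀ j ∈ S, i ≠ j → c i j = b)).card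
      ≤ (Finset.univ.filter (fun S : Finset V =>
        S.card = r ∧ ∀ i ∈ S, ∀ j ∈ S, i ≠ j → c i j = b)).card
        * (2 * t - 2 - r).choose (t - 1) := by
  classical
  set P := Finset.univ.filter (fun S : Finset V =>
    S.card = r + 1 ∧ ∀ i ∈ S, ∀ j ∈ S, i ≠ j → c i j = b) with hP
  set Q := Finset.univ.filter (fun S : Finset V =>
    S.card = r ∧ ∀ i ∈ S, ∀ j ∈ S, i ≠ j → c i j = b) with hQ
  set A := P.sigma (fun T => T) with hA
  set B := Q.sigma (fun S => Finset.univ.filter fun v => v ∉ S ∧ ∀ u ∈ S, c v u = b) with hB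
  have hAcard : A.card = (r + 1) * P.card := by
    rw [hA, Finset.card_sigma]
    rw [Finset.sum_congr rfl (fun T hT => (Finset.mem_filter.mp hT).2.1)]
    rw [Finset.sum_const, smul_eq_mul, mul_comm]
  have hcardle : A.card ≤ B.card := by
    refine Finset.card_le_card_of_injOn
      (fun p => ⟨p.1.erase p.2, p.2⟩) ?_ ?_
    · rintro ⟨T, v⟩ hp
      rw [hA, Finset.mem_coe, Finset.mem_sigma] at hp
      obtain ⟨hTP, hvT⟩ := hp
      rw [hP, Finset.mem_filter] at hTP
      obtain ⟨-, hTcard, hTcl⟩ := hTP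
      rw [hB, Finset.mem_coe, Finset.mem_sigma]
      constructor
      · rw [hQ, Finset.mem_filter]
        refine ⟨Finset.mem_univ _, ?_, ?_⟩
        · rw [Finset.card_erase_of_mem hvT, hTcard]
          omega
        · intro i hi j hj hij
          exact hTcl i (Finset.mem_of_mem_erase hi) j (Finset.mem_of_mem_erase hj) hij
      · rw [Finset.mem_filter]
        refine ⟨Finset.mem_univ _, Finset.notMem_erase _ _, ?_⟩
        intro u hu
        exact hTcl v hvT u (Finset.mem_of_mem_erase hu)
          (fun h => Finset.notMem_erase v T (h ▸ hu))
    · rintro ⟨T, v⟩ hp ⟨T', v'⟩ hq heq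
      simp only [hA, Finset.mem_coe, Finset.mem_sigma] at hp hq
      injection heq with herase hv
      dsimp only at herase hv
      subst hv
      have hT : T = T' := by
        rw [← Finset.insert_erase hp.2, ← Finset.insert_erase hq.2, herase]
      subst hT
      rfl
  have hBcard : B.card ≤ Q.card * (2 * t - 2 - r).choose (t - 1) := by
    rw [hB, Finset.card_sigma]
    calc ∑ S ∈ Q, (Finset.univ.filter fun v => v ∉ S ∧ ∀ u ∈ S, c v u = b).card
        ≤ ∑ _S ∈ Q, (2 * t - 2 - r).choose (t - 1) := by
          refine Finset.sum_le_sum ?_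
          intro S hS
          rw [hQ, Finset.mem_filter] at hS
          exact my_nbhd c hsym t hno b r hr S hS.2.1 hS.2.2
      _ = Q.card * (2 * t - 2 - r).choose (t - 1) := by
          rw [Finset.sum_const, smul_eq_mul]
  omega

theorem my_count {V : Type*} [Fintype V] [DecidableEq V] (c : V → V → Bool)
    (hsym : ∀ i j, c i j = c j i) (t : ℕ)
    (hno : ¬ ∃ (S : Finset V) (b : Bool),
      S.card = t ∧ ∀ i ∈ S, ∀ j ∈ S, i ≠ j → c i j = b)
    (b : Bool) :
    ∀ k : ℕ, k < t →
      k.factorial * (Finset.univ.filter (fun S : Finset V =>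
          S.card = k ∧ ∀ i ∈ S, ∀ j ∈ S, i ≠ j → c i j = b)).card
        ≤ ∏ r ∈ Finset.range k, (2 * t - 2 - r).choose (t - 1) := by
  intro k
  induction k with
  | zero =>
    intro _
    simp only [Nat.factorial_zero, Finset.range_zero, Finset.prod_empty, one_mul]
    refine Finset.card_le_one.mpr ?_
    intro S hS S' hS'
    rw [Finset.mem_filter] at hS hS'
    rw [Finset.card_eq_zero.mp hS.2.1, Finset.card_eq_zero.mp hS'.2.1]
  | succ k ih =>
    intro hk
    have h1 := my_step c hsym t hno b k (by omega)
    have h2 := ih (by omega)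
    calc (k + 1).factorial * (Finset.univ.filter (fun S : Finset V =>
          S.card = k + 1 ∧ ∀ i ∈ S, ∀ j ∈ S, i ≠ j → c i j = b)).card
        = k.factorial * ((k + 1) * (Finset.univ.filter (fun S : Finset V =>
          S.card = k + 1 ∧ ∀ i ∈ S, ∀ j ∈ S, i ≠ j → c i j = b)).card) := by
          rw [Nat.factorial_succ]; ring
      _ ≤ k.factorial * ((Finset.univ.filter (fun S : Finset V =>
          S.card = k ∧ ∀ i ∈ S, ∀ j ∈ S, i ≠ j → c i j = b)).card
          * (2 * t - 2 - k).choose (t - 1)) := Nat.mul_le_mul_left _ h1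
      _ = (k.factorial * (Finset.univ.filter (fun S : Finset V =>
          S.card = k ∧ ∀ i ∈ S, ∀ j ∈ S, i ≠ j → c i j = b)).card)
          * (2 * t - 2 - k).choose (t - 1) := by ring
      _ ≤ (∏ r ∈ Finset.range k, (2 * t - 2 - r).choose (t - 1))
          * (2 * t - 2 - k).choose (t - 1) := Nat.mul_le_mul_right _ h2
      _ = ∏ r ∈ Finset.range (k + 1), (2 * t - 2 - r).choose (t - 1) := by
          rw [Finset.prod_range_succ]

theorem stmt_12 (V : Type*) [Fintype V] [DecidableEq V]
    (c : V → V → Bool) (hsym : ∀ i j, c i j = c j i) (t k : ℕ) (hkt : k < t)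
    (hno : ¬ ∃ (S : Finset V) (b : Bool),
      S.card = t ∧ ∀ i ∈ S, ∀ j ∈ S, i ≠ j → c i j = b) :
    ((Finset.univ.filter (fun S : Finset V =>
        S.card = k ∧ ∃ b, ∀ i ∈ S, ∀ j ∈ S, i ≠ j → c i j = b)).card : ℝ)
      ≤ (2 / (Nat.factorial k : ℝ)) *
        ∏ r ∈ Finset.range k, (((2 * t - 2 - r).choose (t - 1) : ℕ) : ℝ) := by
  classical
  have h1 := my_count c hsym t hno true k hkt
  have h2 := my_count c hsym t hno false k hkt
  have hsub : Finset.univ.filter (fun S : Finset V =>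
      S.card = k ∧ ∃ b, ∀ i ∈ S, ∀ j ∈ S, i ≠ j → c i j = b)
      ⊆ (Finset.univ.filter (fun S : Finset V =>
          S.card = k ∧ ∀ i ∈ S, ∀ j ∈ S, i ≠ j → c i j = true))
        ∪ (Finset.univ.filter (fun S : Finset V =>
          S.card = k ∧ ∀ i ∈ S, ∀ j ∈ S, i ≠ j → c i j = false)) := by
    intro S hS
    rw [Finset.mem_filter] at hS
    obtain ⟨-, hcard, b, hcl⟩ := hS
    cases b
    · exact Finset.mem_union_right _
        (Finset.mem_filter.mpr ⟨Finset.mem_univ _, hcard, hcl⟩)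
    · exact Finset.mem_union_left _
        (Finset.mem_filter.mpr ⟨Finset.mem_univ _, hcard, hcl⟩)
  have hsplit : (Finset.univ.filter (fun S : Finset V =>
      S.card = k ∧ ∃ b, ∀ i ∈ S, ∀ j ∈ S, i ≠ j → c i j = b)).card
      ≤ (Finset.univ.filter (fun S : Finset V =>
          S.card = k ∧ ∀ i ∈ S, ∀ j ∈ S, i ≠ j → c i j = true)).card
        + (Finset.univ.filter (fun S : Finset V =>
          S.card = k ∧ ∀ i ∈ S, ∀ j ∈ S, i ≠ j → c i j = false)).card :=
    le_trans (Finset.card_le_card hsub) (Finset.card_union_le _ _)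
  have hnat : k.factorial * (Finset.univ.filter (fun S : Finset V =>
      S.card = k ∧ ∃ b, ∀ i ∈ S, ∀ j ∈ S, i ≠ j → c i j = b)).card
      ≤ 2 * ∏ r ∈ Finset.range k, (2 * t - 2 - r).choose (t - 1) := by
    calc k.factorial * (Finset.univ.filter (fun S : Finset V =>
        S.card = k ∧ ∃ b, ∀ i ∈ S, ∀ j ∈ S, i ≠ j → c i j = b)).card
        ≤ k.factorial * ((Finset.univ.filter (fun S : Finset V =>
            S.card = k ∧ ∀ i ∈ S, ∀ j ∈ S, i ≠ j → c i j = true)).card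
          + (Finset.univ.filter (fun S : Finset V =>
            S.card = k ∧ ∀ i ∈ S, ∀ j ∈ S, i ≠ j → c i j = false)).card) :=
          Nat.mul_le_mul_left _ hsplit
      _ = k.factorial * (Finset.univ.filter (fun S : Finset V =>
            S.card = k ∧ ∀ i ∈ S, ∀ j ∈ S, i ≠ j → c i j = true)).card
          + k.factorial * (Finset.univ.filter (fun S : Finset V =>
            S.card = k ∧ ∀ i ∈ S, ∀ j ∈ S, i ≠ j → c i j = false)).card := by ring
      _ ≤ (∏ r ∈ Finset.range k, (2 * t - 2 - r).choose (t - 1))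
          + (∏ r ∈ Finset.range k, (2 * t - 2 - r).choose (t - 1)) := add_le_add h1 h2
      _ = 2 * ∏ r ∈ Finset.range k, (2 * t - 2 - r).choose (t - 1) := by ring
  have hfact : (0 : ℝ) < (Nat.factorial k : ℝ) :=
    Nat.cast_pos.mpr k.factorial_pos
  have hR : ((k.factorial * (Finset.univ.filter (fun S : Finset V =>
      S.card = k ∧ ∃ b, ∀ i ∈ S, ∀ j ∈ S, i ≠ j → c i j = b)).card : ℕ) : ℝ)
      ≤ ((2 * ∏ r ∈ Finset.range k, (2 * t - 2 - r).choose (t - 1) : ℕ) : ℝ) :=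
    Nat.cast_le.mpr hnat
  push_cast at hR
  rw [div_mul_eq_mul_div, le_div_iff₀ hfact, mul_comm]
  linarith [hR]
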